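/- Let u : A ⥤ B be a functor between small categories. The following conditions are equivalent: (a) u is a fibration, i.e. for every arrow p : b ⟶ b' of B and every object a' of A with u a' = b' there exists a hypercartesian arrow c : a ⟶ a' of A with u c = p; (b) u is smooth with respect to the minimal right asphericity structure (the class of small categories having a terminal object); (c) for every pair of composable functors B'' ⥤ B' ⥤ B with pullbacks A' = B' ×_B A and A'' = B'' ×_{B'} A' in Cat, if the functor B'' ⥤ B' has a right adjoint then so does the induced functor A'' ⥤ A'; (d) for every functor [2] ⥤ B (where [2] = {0 → 1 → 2}), forming the pullback A' = [2] ×_B A and then the pullback A'' = [1] ×_{[2]} A' along the inclusion [1] = {0 → 1} ⥤ [2], the induced functor A'' ⥤ A' has a right adjoint. -/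

import Mathlib

open CategoryTheory Limits

namespace Paper

/-- A functor between small categories is aspheric (w.r.t. a class 𝒜 of small
categories) if all its comma categories `A/b` belong to 𝒜. -/
def Aspheric (𝒜 : Set Cat.{0,0}) {A B : Cat.{0,0}} (u : A ⥤ B) : Prop :=
  ∀ b : B, Cat.of (CostructuredArrow u b) ∈ 𝒜

/-- `u : A ⥤ B` is smooth (w.r.t. 𝒜) if, for all composable `t : B'' ⟶ B'`, `s : B' ⟶ B`
with pullbacks `A' = B' ×_B A` and `A'' = B'' ×_{B'} A'`, asphericity of `t` implies
asphericity of the induced functor `A'' ⥤ A'`. -/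
def Smooth (𝒜 : Set Cat.{0,0}) {A B : Cat.{0,0}} (u : A ⟶ B) : Prop :=
  ∀ (B' B'' : Cat.{0,0}) (s : B' ⟶ B) (t : B'' ⟶ B'),
    Aspheric 𝒜 t.toFunctor → Aspheric 𝒜 (pullback.snd t (pullback.fst s u)).toFunctor

/-- An arrow `c : a ⟶ a'` is hypercartesian with respect to `u` if every
`f : a'' ⟶ a'` together with a factorization `u f = h ≫ u c` in `B` factors uniquely
through `c` over `h`. -/
def IsHypercartesian {A B : Cat.{0,0}} (u : A ⥤ B) {a a' : A} (c : a ⟶ a') : Prop :=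
  ∀ (a'' : A) (f : a'' ⟶ a') (h : u.obj a'' ⟶ u.obj a),
    u.map f = h ≫ u.map c → ∃! g : a'' ⟶ a, u.map g = h ∧ f = g ≫ c

/-- `u` is a fibration if every arrow of `B` admits a hypercartesian lift with any
prescribed target. -/
def IsFibration {A B : Cat.{0,0}} (u : A ⥤ B) : Prop :=
  ∀ ⦃b b' : B⦄ (p : b ⟶ b') (a' : A) (ha' : u.obj a' = b'),
    ∃ (a : A) (c : a ⟶ a') (ha : u.obj a = b),
      u.map c = eqToHom ha ≫ p ≫ eqToHom ha'.symm ∧ IsHypercartesian u c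

/-- The inclusion `[1] ⥤ [2]` of `{0 → 1}`, where `[n]` is the linearly ordered
category `Fin (n+1)`. -/
def incl12 : Cat.of (Fin 2) ⟶ Cat.of (Fin 3) :=
  ((Fin.strictMono_castLE (by omega)).monotone.functor : Fin 2 ⥤ Fin 3).toCatHom



open CategoryTheory Limits


universe v u
section PbDef
variable {X : Type u} {Y : Type u} {Z : Type u} [Category.{v} X] [Category.{v} Y] [Category.{v} Z]
variable (f : X ⥤ Z) (g : Y ⥤ Z)

/-- concrete strict pullback of categories -/
structure Pb where
  x : X
  y : Y
  h : f.obj x = g.obj y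

variable {f g}

@[ext]
structure PbHom (P Q : Pb f g) where
  p : @Quiver.Hom X CategoryStruct.toQuiver P.x Q.x
  q : @Quiver.Hom Y CategoryStruct.toQuiver P.y Q.y
  w : f.map p ≫ eqToHom Q.h = eqToHom P.h ≫ g.map q

lemma Pb.obj_ext {P Q : Pb f g} (hx : P.x = Q.x) (hy : P.y = Q.y) : P = Q := by
  cases P; cases Q; cases hx; cases hy; rfl

instance : Category (Pb f g) where
  Hom := PbHom
  id P := ⟨𝟙 _, 𝟙 _, by simp⟩
  comp {P Q R} a b := ⟨a.p ≫ b.p, a.q ≫ b.q, by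
    rw [Functor.map_comp, Functor.map_comp, Category.assoc, b.w, ← Category.assoc, a.w]
    simp⟩

@[simp] lemma Pb.id_p (P : Pb f g) : (𝟙 P : PbHom P P).p = 𝟙 P.x := rfl
@[simp] lemma Pb.id_q (P : Pb f g) : (𝟙 P : PbHom P P).q = 𝟙 P.y := rfl
@[simp] lemma Pb.comp_p {P Q R : Pb f g} (a : P ⟶ Q) (b : Q ⟶ R) :
    (a ≫ b).p = a.p ≫ b.p := rfl
@[simp] lemma Pb.comp_q {P Q R : Pb f g} (a : P ⟶ Q) (b : Q ⟶ R) :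
    (a ≫ b).q = a.q ≫ b.q := rfl

@[ext] lemma Pb.hom_ext {P Q : Pb f g} {a b : P ⟶ Q} (hp : a.p = b.p) (hq : a.q = b.q) :
    a = b := PbHom.ext hp hq

@[simp] lemma Pb.eqToHom_p {P Q : Pb f g} (h : P = Q) :
    (eqToHom h).p = eqToHom (by rw [h]) := by subst h; rfl
@[simp] lemma Pb.eqToHom_q {P Q : Pb f g} (h : P = Q) :
    (eqToHom h).q = eqToHom (by rw [h]) := by subst h; rfl

variable (f g)

/-- first projection -/
@[simps] def Pfst : Pb f g ⥤ X where
  obj P := P.x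
  map a := a.p

/-- second projection -/
@[simps] def Psnd : Pb f g ⥤ Y where
  obj P := P.y
  map a := a.q

lemma Pb.condition : Pfst f g ⋙ f = Psnd f g ⋙ g :=
  CategoryTheory.Functor.ext (fun P => P.h) (fun P Q a => by
    simp only [Functor.comp_map, Pfst_map, Psnd_map]
    erw [← Category.assoc, ← a.w]; erw [Category.assoc, eqToHom_trans, eqToHom_refl, Category.comp_id]; rfl)

lemma Pb.functor_ext {C : Type*} [Category C] {m m' : C ⥤ Pb f g}
    (h1 : m ⋙ Pfst f g = m' ⋙ Pfst f g) (h2 : m ⋙ Psnd f g = m' ⋙ Psnd f g) :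
    m = m' := by
  refine CategoryTheory.Functor.ext
    (fun z => Pb.obj_ext (Functor.congr_obj h1 z) (Functor.congr_obj h2 z))
    (fun z z' α => ?_)
  apply Pb.hom_ext
  · have := Functor.congr_hom h1 α
    simp only [Functor.comp_map, Pfst_map] at this
    simp [this]
    rfl
  · have := Functor.congr_hom h2 α
    simp only [Functor.comp_map, Psnd_map] at this
    simp [this]
    rfl

end PbDef

section PbLimit

variable {X Y Z : Cat.{v, u}} (f : X ⟶ Z) (g : Y ⟶ Z)

/-- the cone -/
def pbCone : PullbackCone f g :=
  PullbackCone.mk (C := Cat.{v,u}) (W := Cat.of (Pb f.toFunctor g.toFunctor))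
    (Pfst f.toFunctor g.toFunctor).toCatHom (Psnd f.toFunctor g.toFunctor).toCatHom
    (Cat.ext (Pb.condition f.toFunctor g.toFunctor))

/-- the lift -/
def pbLift (c : PullbackCone f g) : c.pt ⥤ Pb f.toFunctor g.toFunctor where
  obj z := ⟨c.fst.toFunctor.obj z, c.snd.toFunctor.obj z,
    Functor.congr_obj (congrArg Cat.Hom.toFunctor c.condition) z⟩
  map {z z'} m := ⟨c.fst.toFunctor.map m, c.snd.toFunctor.map m, by
    have := Functor.congr_hom (congrArg Cat.Hom.toFunctor c.condition) m
    simp only [Cat.Hom.comp_toFunctor, Functor.comp_map] at this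
    rw [this]; simp⟩
  map_id z := by ext <;> simp
  map_comp m m' := by ext <;> simp

def pbIsLimit : IsLimit (pbCone f g) := by
  apply PullbackCone.IsLimit.mk (pbCone f g).condition
    (lift := fun c => (pbLift f g c).toCatHom)
  · intro c; rfl
  · intro c; rfl
  · intro c m h1 h2
    have hobj : ∀ z : c.pt, m.toFunctor.obj z = (pbLift f g c).obj z := by
      intro z
      apply Pb.obj_ext
      · exact Functor.congr_obj (congrArg Cat.Hom.toFunctor h1) z
      · exact Functor.congr_obj (congrArg Cat.Hom.toFunctor h2) z
    exact Cat.ext (Pb.functor_ext (f := f.toFunctor) (g := g.toFunctor) (m := m.toFunctor)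
      (m' := pbLift f g c) (congrArg Cat.Hom.toFunctor h1) (congrArg Cat.Hom.toFunctor h2))

end PbLimit

section Helpers
open CategoryTheory Limits
variable {C D E : Type*} [Category C] [Category D] [Category E]

lemma comp_equiv_left_iff (F : C ⥤ D) (G : D ⥤ E) [F.IsEquivalence] :
    (F ⋙ G).IsLeftAdjoint ↔ G.IsLeftAdjoint := by
  constructor
  · intro h
    exact Functor.isLeftAdjoint_of_iso
      ((Functor.associator _ _ _).symm ≪≫
        Functor.isoWhiskerRight F.asEquivalence.counitIso G ≪≫ G.leftUnitor)
      (F := F.asEquivalence.inverse ⋙ (F ⋙ G))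
  · intro h
    infer_instance

lemma comp_equiv_right_iff (G : C ⥤ D) (F : D ⥤ E) [F.IsEquivalence] :
    (G ⋙ F).IsLeftAdjoint ↔ G.IsLeftAdjoint := by
  constructor
  · intro h
    exact Functor.isLeftAdjoint_of_iso
      ((Functor.associator _ _ _) ≪≫
        Functor.isoWhiskerLeft G F.asEquivalence.unitIso.symm ≪≫ G.rightUnitor)
      (F := (G ⋙ F) ⋙ F.asEquivalence.inverse)
  · intro h
    infer_instance

end Helpers
section Bridge
open CategoryTheory Limits

noncomputable def pbIso {X Y Z : Cat.{0,0}} (f : X ⟶ Z) (g : Y ⟶ Z) :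
    (pullback f g : Cat.{0,0}) ≅ Cat.of (Pb f.toFunctor g.toFunctor) :=
  limit.isoLimitCone ⟨pbCone f g, pbIsLimit f g⟩

lemma pbIso_hom_fst {X Y Z : Cat.{0,0}} (f : X ⟶ Z) (g : Y ⟶ Z) :
    (pbIso f g).hom ≫ (Pfst f.toFunctor g.toFunctor).toCatHom = pullback.fst f g :=
  limit.isoLimitCone_hom_π _ WalkingCospan.left

lemma pbIso_hom_snd {X Y Z : Cat.{0,0}} (f : X ⟶ Z) (g : Y ⟶ Z) :
    (pbIso f g).hom ≫ (Psnd f.toFunctor g.toFunctor).toCatHom = pullback.snd f g :=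
  limit.isoLimitCone_hom_π _ WalkingCospan.right

variable {A B B' B'' : Cat.{0,0}} (u : A ⟶ B) (s : B' ⟶ B) (t : B'' ⟶ B')

/-- the concrete iterated pullback cone -/
noncomputable def pbCone2 : PullbackCone t (pullback.fst s u) :=
  PullbackCone.mk (C := Cat.{0,0}) (W := Cat.of (Pb t.toFunctor (Pfst s.toFunctor u.toFunctor)))
    (Pfst t.toFunctor (Pfst s.toFunctor u.toFunctor)).toCatHom
    ((Psnd t.toFunctor (Pfst s.toFunctor u.toFunctor)).toCatHom ≫ (pbIso s u).inv)
    (by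
      have h : (pbIso s u).inv ≫ pullback.fst s u = (Pfst s.toFunctor u.toFunctor).toCatHom := by
        erw [← pbIso_hom_fst s u, ← Category.assoc, Iso.inv_hom_id, Category.id_comp]
      rw [Category.assoc, h]
      exact Cat.ext (Pb.condition t.toFunctor (Pfst s.toFunctor u.toFunctor)))

noncomputable def pbCone2Aux (c : PullbackCone t (pullback.fst s u)) :
    PullbackCone (C := Cat.{0,0}) (X := B'') (Y := Cat.of (Pb s.toFunctor u.toFunctor)) (Z := B') t
      (Pfst s.toFunctor u.toFunctor).toCatHom :=
  PullbackCone.mk c.fst (c.snd ≫ (pbIso s u).hom)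
    (by erw [Category.assoc, pbIso_hom_fst s u]; exact c.condition)

noncomputable def pbLift2 (c : PullbackCone t (pullback.fst s u)) :
    c.pt ⟶ Cat.of (Pb t.toFunctor (Pfst s.toFunctor u.toFunctor)) :=
  (pbLift t _ (pbCone2Aux u s t c)).toCatHom

noncomputable def pbIsLimit2 : IsLimit (pbCone2 u s t) := by
  apply PullbackCone.IsLimit.mk (pbCone2 u s t).condition (lift := fun c => pbLift2 u s t c)
  · intro c; rfl
  · intro c
    have h : pbLift2 u s t c ≫
        (Psnd t.toFunctor (Pfst s.toFunctor u.toFunctor)).toCatHom =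
        c.snd ≫ (pbIso s u).hom := rfl
    show pbLift2 u s t c ≫
        ((Psnd t.toFunctor (Pfst s.toFunctor u.toFunctor)).toCatHom ≫ (pbIso s u).inv) =
        c.snd
    rw [← Category.assoc, h, Category.assoc, Iso.hom_inv_id, Category.comp_id]
  · intro c m h1 h2
    have h2' : m ≫ (Psnd t.toFunctor (Pfst s.toFunctor u.toFunctor)).toCatHom =
        c.snd ≫ (pbIso s u).hom := by
      rw [← h2]
      show m ≫ (Psnd t.toFunctor (Pfst s.toFunctor u.toFunctor)).toCatHom =
        (m ≫ ((Psnd t.toFunctor (Pfst s.toFunctor u.toFunctor)).toCatHom ≫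
          (pbIso s u).inv)) ≫ (pbIso s u).hom
      erw [Category.assoc, Category.assoc, Iso.inv_hom_id, Category.comp_id]
    exact Cat.ext (Pb.functor_ext (f := t.toFunctor) (g := (Pfst s.toFunctor u.toFunctor))
      (m := m.toFunctor)
      (m' := (pbLift2 u s t c).toFunctor)
      (congrArg Cat.Hom.toFunctor h1) (congrArg Cat.Hom.toFunctor h2'))

noncomputable def pbIso2 :
    (pullback t (pullback.fst s u) : Cat.{0,0}) ≅ Cat.of (Pb t.toFunctor (Pfst s.toFunctor u.toFunctor)) :=
  limit.isoLimitCone ⟨pbCone2 u s t, pbIsLimit2 u s t⟩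

lemma pb_snd_eq :
    pullback.snd t (pullback.fst s u) =
    (pbIso2 u s t).hom ≫
      ((Psnd t.toFunctor (Pfst s.toFunctor u.toFunctor)).toCatHom ≫ (pbIso s u).inv) :=
  (limit.isoLimitCone_hom_π ⟨pbCone2 u s t, pbIsLimit2 u s t⟩ WalkingCospan.right).symm

/-- The bridge: adjointness of the abstract iterated pullback functor is equivalent to
adjointness of the concrete one. -/
lemma bridge :
    (pullback.snd t (pullback.fst s u)).toFunctor.IsLeftAdjoint ↔
    (Psnd t.toFunctor (Pfst s.toFunctor u.toFunctor)).IsLeftAdjoint := by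
  rw [pb_snd_eq u s t]
  haveI : (pbIso2 u s t).hom.toFunctor.IsEquivalence :=
    (Cat.equivOfIso (pbIso2 u s t)).isEquivalence_functor
  haveI : (pbIso s u).inv.toFunctor.IsEquivalence :=
    (Cat.equivOfIso (pbIso s u).symm).isEquivalence_functor
  show ((pbIso2 u s t).hom.toFunctor ⋙ (Psnd t.toFunctor (Pfst s.toFunctor u.toFunctor) ⋙ (pbIso s u).inv.toFunctor)).IsLeftAdjoint ↔ _
  exact (comp_equiv_left_iff _ _).trans (@comp_equiv_right_iff _ _ _ _ _ _ _ _ this)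

end Bridge
section Misc
open CategoryTheory Limits

lemma asphericIff {A B : Cat.{0,0}} (u : A ⟶ B) :
    Aspheric {C : Cat.{0,0} | HasTerminal C} u.toFunctor ↔ Functor.IsLeftAdjoint u.toFunctor := by
  rw [isLeftAdjoint_iff_hasTerminal_costructuredArrow]
  constructor
  · intro h b; exact h b
  · intro h b; exact h b

lemma incl12_isLeftAdjoint : Functor.IsLeftAdjoint incl12.toFunctor := by
  have mono : Monotone (fun k : Fin 3 => (⟨min k.1 1, by omega⟩ : Fin 2)) := by
    intro a b hab
    simp only [Fin.le_def] at *
    omega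
  refine ⟨mono.functor, ⟨Adjunction.mkOfHomEquiv
    { homEquiv := fun j k =>
        { toFun := fun m => ULift.up (PLift.up (show j.1 ≤ min k.1 1 by
            have h2 : j.1 ≤ k.1 := m.down.down
            have h3 := j.isLt
            omega))
          invFun := fun m => ULift.up (PLift.up (show j.1 ≤ k.1 by
            have h2 : j.1 ≤ min k.1 1 := m.down.down
            omega))
          left_inv := fun _ => rfl
          right_inv := fun _ => rfl }
      homEquiv_naturality_left_symm := fun _ _ => Subsingleton.elim (α := ULift (PLift _)) _ _
      homEquiv_naturality_right := fun _ _ => Subsingleton.elim (α := ULift (PLift _)) _ _ }⟩⟩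

end Misc
section MainA
open CategoryTheory Limits

lemma mainA {A B B' B'' : Cat.{0,0}} (u : A ⥤ B) (hu : IsFibration u)
    (s : B' ⥤ B) (t : B'' ⥤ B') (ht : t.IsLeftAdjoint) :
    (Psnd t (Pfst s u) : Pb t (Pfst s u) ⥤ Pb s u).IsLeftAdjoint := by
  obtain ⟨ρ, ⟨adj⟩⟩ := ht
  rw [isLeftAdjoint_iff_hasTerminal_costructuredArrow]
  intro X
  obtain ⟨b', a, h⟩ := X
  set ε : t.obj (ρ.obj b') ⟶ b' := adj.counit.app b' with hεdef
  obtain ⟨a₀, c, ha₀, hc, hyper⟩ := hu (s.map ε ≫ eqToHom h) a rfl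
  simp only [eqToHom_refl, Category.comp_id] at hc
  have hPth : s.obj (t.obj (ρ.obj b')) = u.obj a₀ := ha₀.symm
  set Pt : Pb s u := ⟨t.obj (ρ.obj b'), a₀, hPth⟩ with hPt
  set Y₀ : Pb t (Pfst s u) := ⟨ρ.obj b', Pt, rfl⟩ with hY₀
  have cohε : s.map ε ≫ eqToHom h = eqToHom hPth ≫ u.map c := by
    rw [hc]; simp
  set εH : PbHom Pt (⟨b', a, h⟩ : Pb s u) := ⟨ε, c, cohε⟩ with hεH
  have key : ∀ (YL : Pb t (Pfst s u)) (m' : YL.y ⟶ (⟨b', a, h⟩ : Pb s u)),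
      ∃! γ : YL ⟶ Y₀, (Psnd t (Pfst s u)).map γ ≫ (εH : Pt ⟶ ⟨b', a, h⟩) = m' := by
    rintro ⟨bx, ⟨b1, a1, h1⟩, e₁⟩ ⟨β, α, cohm⟩
    dsimp only [Pfst_obj, Psnd_obj] at e₁ β α cohm ⊢
    change t.obj bx = b1 at e₁
    set γb := (adj.homEquiv bx b') (eqToHom e₁ ≫ β) with hγb
    have htγ : t.map γb ≫ ε = eqToHom e₁ ≫ β := by
      have h2 := adj.homEquiv_counit (X := bx) (Y := b') (g := γb)
      rw [hγb, Equiv.symm_apply_apply, ← hγb, ← hεdef] at h2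
      exact h2.symm
    set ψp : b1 ⟶ t.obj (ρ.obj b') := eqToHom e₁.symm ≫ t.map γb with hψp
    have hψpε : ψp ≫ ε = β := by
      rw [hψp, Category.assoc, htγ, ← Category.assoc, eqToHom_trans, eqToHom_refl,
        Category.id_comp]
    set h' : u.obj a1 ⟶ u.obj a₀ := eqToHom h1.symm ≫ s.map ψp ≫ eqToHom hPth with hh'
    have hsψε : s.map ψp ≫ s.map ε = s.map β := by rw [← Functor.map_comp, hψpε]
    have hαfact : u.map α = h' ≫ u.map c := by
      rw [hh', hc]
      simp only [Category.assoc, eqToHom_trans, eqToHom_trans_assoc, eqToHom_refl,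
        Category.id_comp]
      rw [← Category.assoc (s.map ψp) (s.map ε), hsψε, cohm]
      simp
    obtain ⟨ζ, ⟨hζ1, hζ2⟩, hζu⟩ := hyper a1 α h' hαfact
    have wψ : s.map ψp ≫ eqToHom hPth = eqToHom h1 ≫ u.map ζ := by
      rw [hζ1, hh']; simp
    have wγ : t.map γb ≫ eqToHom (Y₀.h) = eqToHom e₁ ≫
        (Pfst s u).map (⟨ψp, ζ, wψ⟩ : PbHom ⟨b1, a1, h1⟩ Pt) := by
      simp [hψp]
      erw [eqToHom_trans_assoc, eqToHom_refl, eqToHom_refl, Category.id_comp, Category.comp_id]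
    refine ⟨⟨γb, ⟨ψp, ζ, wψ⟩, wγ⟩, ?_, ?_⟩
    · apply Pb.hom_ext
      · exact hψpε
      · exact hζ2.symm
    · rintro ⟨γp, γq, γw⟩ hcomm
      have hp' : γq.p ≫ ε = β := congrArg PbHom.p hcomm
      have hq' : γq.q ≫ c = α := congrArg PbHom.q hcomm
      have htp : t.map γp = eqToHom e₁ ≫ γq.p := by
        have h3 := γw; erw [eqToHom_refl, Category.comp_id] at h3; exact h3
      have hγp : γp = γb := by
        apply (adj.homEquiv bx b').symm.injective
        rw [hγb, Equiv.symm_apply_apply, adj.homEquiv_counit, ← hεdef, htp,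
          Category.assoc, hp']
      have hqp : γq.p = ψp := by
        rw [hψp, ← hγp, htp, ← Category.assoc, eqToHom_trans, eqToHom_refl, Category.id_comp]
      have huq : u.map γq.q = h' := by
        have hw := γq.w
        rw [hqp] at hw
        rw [hh']
        calc u.map γq.q
            = eqToHom h1.symm ≫ (eqToHom h1 ≫ u.map γq.q) := by simp
          _ = eqToHom h1.symm ≫ s.map ψp ≫ eqToHom hPth := by rw [← hw]
      have hqq : γq.q = ζ := hζu γq.q ⟨huq, hq'.symm⟩
      apply Pb.hom_ext
      · exact hγp
      · apply Pb.hom_ext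
        · exact hqp
        · exact hqq
  apply IsTerminal.hasTerminal
    (X := CostructuredArrow.mk
      (show (Psnd t (Pfst s u)).obj Y₀ ⟶ (⟨b', a, h⟩ : Pb s u) from εH))
  refine IsTerminal.ofUniqueHom
    (fun Y => CostructuredArrow.homMk (key Y.left Y.hom).exists.choose ?_)
    (fun Y m => ?_)
  · exact (key Y.left Y.hom).exists.choose_spec
  · apply CostructuredArrow.hom_ext
    exact (key Y.left Y.hom).unique (CostructuredArrow.w m)
      (key Y.left Y.hom).exists.choose_spec

end MainA
section MainB
open CategoryTheory Limits

/-- canonical 2-chain functor -/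
def F3 {B : Cat.{0,0}} {b0 b1 b2 : B} (f : b0 ⟶ b1) (g : b1 ⟶ b2) : Fin 3 ⥤ B :=
  (ComposableArrows.mk₂ f g : Fin 3 ⥤ B)

def h01 : (0 : Fin 3) ⟶ (1 : Fin 3) :=
  ULift.up (PLift.up (by decide))
def h12 : (1 : Fin 3) ⟶ (2 : Fin 3) :=
  ULift.up (PLift.up (by decide))
def h02 : (0 : Fin 3) ⟶ (2 : Fin 3) :=
  ULift.up (PLift.up (by decide))

abbrev incl12F : Fin 2 ⥤ Fin 3 := incl12.toFunctor

lemma corefl {A B : Cat.{0,0}} (u : A ⥤ B) (φ : Fin 3 ⥤ B)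
    (hT : (Psnd incl12F (Pfst φ u) : Pb incl12F (Pfst φ u) ⥤ Pb φ u).IsLeftAdjoint)
    (X : Pb φ u) :
    ∃ (P₀ : Pb φ u) (ε : P₀ ⟶ X), P₀.x.1 ≤ 1 ∧
      ∀ (P' : Pb φ u), P'.x.1 ≤ 1 → ∀ (m' : P' ⟶ X), ∃! ψ : P' ⟶ P₀, ψ ≫ ε = m' := by
  obtain ⟨R, ⟨adj⟩⟩ := hT
  refine ⟨(R.obj X).y, adj.counit.app X, ?_, ?_⟩
  · have h1 : (incl12F.obj (R.obj X).x).1 = (R.obj X).y.x.1 := congrArg Fin.val (R.obj X).h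
    have h2 : (incl12F.obj (R.obj X).x).1 = (R.obj X).x.1 := rfl
    have h3 := (R.obj X).x.isLt
    omega
  · intro P' hP' m'
    have e' : incl12F.obj (⟨P'.x.1, by omega⟩ : Fin 2) = (Pfst φ u).obj P' := by
      apply Fin.ext
      rfl
    set Y' : Pb incl12F (Pfst φ u) := ⟨⟨P'.x.1, by omega⟩, P', e'⟩ with hY'
    set γ := (adj.homEquiv Y' X) m' with hγ
    refine ⟨γ.q, ?_, ?_⟩
    · have h2 := adj.homEquiv_counit (X := Y') (Y := X) (g := γ)
      erw [hγ, Equiv.symm_apply_apply] at h2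
      exact h2.symm
    · intro ψ hψ
      have hle : (⟨P'.x.1, by omega⟩ : Fin 2) ≤ (R.obj X).x := by
        have k1 : P'.x.1 ≤ (R.obj X).y.x.1 := ψ.p.down.down
        have k2 : (incl12F.obj (R.obj X).x).1 = (R.obj X).y.x.1 := congrArg Fin.val (R.obj X).h
        have k3 : (incl12F.obj (R.obj X).x).1 = (R.obj X).x.1 := rfl
        show P'.x.1 ≤ (R.obj X).x.1
        omega
      set γ' : Y' ⟶ R.obj X :=
        ⟨ULift.up (PLift.up hle), ψ, Subsingleton.elim (α := ULift (PLift _)) _ _⟩ with hγ'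
      have hγ'γ : γ' = γ := by
        apply (adj.homEquiv Y' X).symm.injective
        erw [hγ, Equiv.symm_apply_apply, adj.homEquiv_counit]
        exact hψ
      exact congrArg PbHom.q hγ'γ.symm ▸ rfl

end MainB
section MainB2
open CategoryTheory Limits

lemma comp_eqToHom_rearr {C : Type*} [Category C] {x y z : C} {e : x = y} {f : y ⟶ z}
    {g : x ⟶ z} (h : eqToHom e ≫ f = g) : f = eqToHom e.symm ≫ g := by
  subst e; simpa using h

lemma F3_map01 {B : Cat.{0,0}} {b0 b1 b2 : B} (f : b0 ⟶ b1) (g : b1 ⟶ b2) :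
    (F3 f g).map h01 = f := rfl
lemma F3_map12 {B : Cat.{0,0}} {b0 b1 b2 : B} (f : b0 ⟶ b1) (g : b1 ⟶ b2) :
    (F3 f g).map h12 = g := rfl
lemma F3_map02 {B : Cat.{0,0}} {b0 b1 b2 : B} (f : b0 ⟶ b1) (g : b1 ⟶ b2) :
    (F3 f g).map h02 = f ≫ g := rfl

lemma F3_obj0 {B : Cat.{0,0}} {b0 b1 b2 : B} (f : b0 ⟶ b1) (g : b1 ⟶ b2) :
    (F3 f g).obj 0 = b0 := rfl
lemma F3_obj1 {B : Cat.{0,0}} {b0 b1 b2 : B} (f : b0 ⟶ b1) (g : b1 ⟶ b2) :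
    (F3 f g).obj 1 = b1 := rfl
lemma F3_obj2 {B : Cat.{0,0}} {b0 b1 b2 : B} (f : b0 ⟶ b1) (g : b1 ⟶ b2) :
    (F3 f g).obj 2 = b2 := rfl

lemma mainB {A B : Cat.{0,0}} (u : A ⥤ B)
    (H : ∀ φ : Fin 3 ⥤ B,
      (Psnd incl12F (Pfst φ u) : Pb incl12F (Pfst φ u) ⥤ Pb φ u).IsLeftAdjoint) :
    IsFibration u := by
  intro b b' p a' ha'
  obtain ⟨P₀, ε, hxle, univ⟩ :=
    corefl u (F3 (𝟙 b) p) (H _) ⟨(2 : Fin 3), a', ha'.symm⟩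
  -- Step 1 : P₀ lies over 1
  have hx1 : P₀.x.1 = 1 := by
    by_contra hne
    have hx0 : P₀.x = (0 : Fin 3) := by
      apply Fin.ext; simp only [Fin.val_zero]; omega
    have hWh : b = u.obj P₀.y := (congrArg (F3 (𝟙 b) p).obj hx0).symm.trans P₀.h
    have hεp : ε.p = eqToHom hx0 ≫ h02 :=
      Subsingleton.elim (α := ULift (PLift _)) _ _
    have hw := ε.w
    rw [hεp, Functor.map_comp, eqToHom_map, F3_map02] at hw
    have cohW : (F3 (𝟙 b) p).map h12 ≫ eqToHom (ha'.symm : b' = u.obj a') =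
        eqToHom hWh ≫ u.map ε.q := by
      rw [F3_map12]
      have h5 := comp_eqToHom_rearr hw.symm
      rw [h5]
      simp
      erw [Category.assoc, eqToHom_trans_assoc, eqToHom_refl, Category.id_comp]
      rfl
    obtain ⟨ψ, -, -⟩ := univ ⟨(1 : Fin 3), P₀.y, hWh⟩ (Nat.le_refl 1)
      ⟨h12, ε.q, cohW⟩
    have hk : (1 : Fin 3).1 ≤ P₀.x.1 := ψ.p.down.down
    simp only [Fin.val_one] at hk
    omega
  have hP₀x : P₀.x = (1 : Fin 3) := by
    apply Fin.ext; simp only [Fin.val_one]; omega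
  have ha : u.obj P₀.y = b := ((congrArg (F3 (𝟙 b) p).obj hP₀x).symm.trans P₀.h).symm
  -- the candidate hypercartesian lift : c := ε.q
  have hc : u.map ε.q = eqToHom ha ≫ p ≫ eqToHom ha'.symm := by
    have hεp : ε.p = eqToHom hP₀x ≫ h12 :=
      Subsingleton.elim (α := ULift (PLift _)) _ _
    have hw := ε.w
    rw [hεp, Functor.map_comp, eqToHom_map, F3_map12] at hw
    have h5 := comp_eqToHom_rearr hw.symm
    rw [h5]
    simp
    erw [Category.assoc, eqToHom_trans_assoc]
    rfl
  refine ⟨P₀.y, ε.q, ha, hc, ?_⟩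
  -- hypercartesianness
  intro a₂ f h hf
  obtain ⟨Q₀, ε₂, hxle₂, univ₂⟩ :=
    corefl u (F3 (h ≫ eqToHom ha) p) (H _) ⟨(2 : Fin 3), a', ha'.symm⟩
  -- W₂ = (1, P₀.y) maps to X₂ via ε.q
  have cohm₂ : (F3 (h ≫ eqToHom ha) p).map h12 ≫ eqToHom (ha'.symm : b' = u.obj a') =
      eqToHom (ha.symm : b = u.obj P₀.y) ≫ u.map ε.q := by
    rw [F3_map12, hc]; simp; rfl
  have hx2 : Q₀.x.1 = 1 := by
    by_contra hne
    obtain ⟨ψ, -, -⟩ := univ₂ ⟨(1 : Fin 3), P₀.y, ha.symm⟩ (Nat.le_refl 1)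
      ⟨h12, ε.q, cohm₂⟩
    have hk : (1 : Fin 3).1 ≤ Q₀.x.1 := ψ.p.down.down
    simp only [Fin.val_one] at hk
    omega
  have hQ₀x : Q₀.x = (1 : Fin 3) := by
    apply Fin.ext; simp only [Fin.val_one]; omega
  have haQ : u.obj Q₀.y = b :=
    ((congrArg (F3 (h ≫ eqToHom ha) p).obj hQ₀x).symm.trans Q₀.h).symm
  have hc₀ : u.map ε₂.q = eqToHom haQ ≫ p ≫ eqToHom ha'.symm := by
    have hεp : ε₂.p = eqToHom hQ₀x ≫ h12 :=
      Subsingleton.elim (α := ULift (PLift _)) _ _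
    have hw := ε₂.w
    rw [hεp, Functor.map_comp, eqToHom_map, F3_map12] at hw
    have h5 := comp_eqToHom_rearr hw.symm
    rw [h5]
    simp
    erw [Category.assoc, eqToHom_trans_assoc]
    rfl
  -- ζ : P₀.y ⟶ Q₀.y
  obtain ⟨ψζ, hψζ, -⟩ := univ₂ ⟨(1 : Fin 3), P₀.y, ha.symm⟩ (Nat.le_refl 1)
    ⟨h12, ε.q, cohm₂⟩
  have hζc : ψζ.q ≫ ε₂.q = ε.q := congrArg PbHom.q hψζ
  have huζ : u.map ψζ.q = eqToHom ha ≫ eqToHom haQ.symm := by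
    have hp : ψζ.p = eqToHom hQ₀x.symm := Subsingleton.elim (α := ULift (PLift _)) _ _
    have hw := ψζ.w
    rw [hp, eqToHom_map] at hw
    have h5 := comp_eqToHom_rearr hw.symm
    rw [h5]
    simp
  -- ζ' : Q₀.y ⟶ P₀.y  (factor c₀ through the φ₁-coreflection)
  have cohm₁ : (F3 (𝟙 b) p).map h12 ≫ eqToHom (ha'.symm : b' = u.obj a') =
      eqToHom (haQ.symm : b = u.obj Q₀.y) ≫ u.map ε₂.q := by
    rw [F3_map12, hc₀]; simp; rfl
  obtain ⟨ψ', hψ', -⟩ := univ ⟨(1 : Fin 3), Q₀.y, haQ.symm⟩ (Nat.le_refl 1)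
    ⟨h12, ε₂.q, cohm₁⟩
  have hζ'c : ψ'.q ≫ ε.q = ε₂.q := congrArg PbHom.q hψ'
  have huζ' : u.map ψ'.q = eqToHom haQ ≫ eqToHom ha.symm := by
    have hp : ψ'.p = eqToHom hP₀x.symm := Subsingleton.elim (α := ULift (PLift _)) _ _
    have hw := ψ'.w
    rw [hp, eqToHom_map] at hw
    have h5 := comp_eqToHom_rearr hw.symm
    rw [h5]
    simp
  -- the retraction identities
  have hretr : ψζ.q ≫ ψ'.q = 𝟙 P₀.y := by
    have wθ : (F3 (𝟙 b) p).map (𝟙 P₀.x) ≫ eqToHom P₀.h =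
        eqToHom P₀.h ≫ u.map (ψζ.q ≫ ψ'.q) := by
      rw [CategoryTheory.Functor.map_id, Functor.map_comp, huζ, huζ']
      simp
    have hθ : (⟨𝟙 P₀.x, ψζ.q ≫ ψ'.q, wθ⟩ : P₀ ⟶ P₀) ≫ ε = ε := by
      apply Pb.hom_ext
      · simp
      · show (ψζ.q ≫ ψ'.q) ≫ ε.q = ε.q
        rw [Category.assoc, hζ'c, hζc]
    have hid : (𝟙 P₀ : P₀ ⟶ P₀) ≫ ε = ε := Category.id_comp ε
    have := (univ P₀ (by omega) ε).unique hθ hid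
    exact congrArg PbHom.q this
  have hretr' : ψ'.q ≫ ψζ.q = 𝟙 Q₀.y := by
    have wθ : (F3 (h ≫ eqToHom ha) p).map (𝟙 Q₀.x) ≫ eqToHom Q₀.h =
        eqToHom Q₀.h ≫ u.map (ψ'.q ≫ ψζ.q) := by
      rw [CategoryTheory.Functor.map_id, Functor.map_comp, huζ, huζ']
      simp
    have hθ : (⟨𝟙 Q₀.x, ψ'.q ≫ ψζ.q, wθ⟩ : Q₀ ⟶ Q₀) ≫ ε₂ = ε₂ := by
      apply Pb.hom_ext
      · simp
      · show (ψ'.q ≫ ψζ.q) ≫ ε₂.q = ε₂.q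
        rw [Category.assoc, hζc, hζ'c]
    have hid : (𝟙 Q₀ : Q₀ ⟶ Q₀) ≫ ε₂ = ε₂ := Category.id_comp ε₂
    have := (univ₂ Q₀ (by omega) ε₂).unique hθ hid
    exact congrArg PbHom.q this
  -- the P_f object over 0 and its map to X₂
  have cohf : (F3 (h ≫ eqToHom ha) p).map h02 ≫ eqToHom (ha'.symm : b' = u.obj a') =
      eqToHom (rfl : u.obj a₂ = u.obj a₂) ≫ u.map f := by
    rw [F3_map02, hf, hc]
    simp
    erw [Category.assoc, Category.assoc]
    rfl
  obtain ⟨ψf, hψf, hψfu⟩ := univ₂ ⟨(0 : Fin 3), a₂, rfl⟩ (Nat.zero_le 1)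
    ⟨h02, f, cohf⟩
  have hζ₀c : ψf.q ≫ ε₂.q = f := congrArg PbHom.q hψf
  have huζ₀ : u.map ψf.q = (h ≫ eqToHom ha) ≫ eqToHom haQ.symm := by
    have hp : ψf.p = h01 ≫ eqToHom hQ₀x.symm :=
      Subsingleton.elim (α := ULift (PLift _)) _ _
    have hw := ψf.w
    rw [hp, Functor.map_comp, eqToHom_map, F3_map01] at hw
    have h5 := comp_eqToHom_rearr hw.symm
    rw [h5]
    simp
    erw [eqToHom_refl, Category.id_comp, Category.assoc, Category.assoc, eqToHom_trans, eqToHom_trans]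
    rfl
  -- the lift g
  refine ⟨ψf.q ≫ ψ'.q, ⟨?_, ?_⟩, ?_⟩
  · rw [Functor.map_comp, huζ₀, huζ']
    simp
  · rw [Category.assoc, hζ'c, hζ₀c]
  · -- uniqueness
    intro g₁ ⟨hg1, hg2⟩
    have hugψ : u.map (g₁ ≫ ψζ.q) = u.map ψf.q := by
      rw [Functor.map_comp, hg1, huζ, huζ₀]
      simp
    have w₁ : (F3 (h ≫ eqToHom ha) p).map ψf.p ≫ eqToHom Q₀.h =
        eqToHom (rfl : u.obj a₂ = u.obj a₂) ≫ u.map (g₁ ≫ ψζ.q) := by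
      rw [hugψ]
      exact ψf.w
    have hcomm₁ : (⟨ψf.p, g₁ ≫ ψζ.q, w₁⟩ :
        (⟨(0 : Fin 3), a₂, rfl⟩ : Pb (F3 (h ≫ eqToHom ha) p) u) ⟶ Q₀) ≫ ε₂ =
        ⟨h02, f, cohf⟩ := by
      apply Pb.hom_ext
      · exact Subsingleton.elim (α := ULift (PLift _)) _ _
      · show (g₁ ≫ ψζ.q) ≫ ε₂.q = f
        rw [Category.assoc, hζc, ← hg2]
    have := hψfu _ hcomm₁
    have hq : g₁ ≫ ψζ.q = ψf.q := congrArg PbHom.q this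
    calc g₁ = g₁ ≫ 𝟙 P₀.y := (Category.comp_id g₁).symm
      _ = g₁ ≫ ψζ.q ≫ ψ'.q := by rw [hretr]
      _ = (g₁ ≫ ψζ.q) ≫ ψ'.q := (Category.assoc _ _ _).symm
      _ = ψf.q ≫ ψ'.q := by rw [hq]

end MainB2

/-- Characterizations of fibrations: (a ↔ b) fibrations are exactly the functors which
are smooth with respect to the minimal right asphericity structure; (a ↔ c) pullbacks
of `u` preserve the property of having a right adjoint; (a ↔ d) it suffices to test
against the inclusion `[1] ⥤ [2]`. -/
theorem isFibration_characterizations {A B : Cat.{0,0}} (u : A ⟶ B) :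
    (IsFibration u.toFunctor ↔ Smooth {C : Cat.{0,0} | HasTerminal C} u) ∧
    (IsFibration u.toFunctor ↔
      ∀ (B' B'' : Cat.{0,0}) (s : B' ⟶ B) (t : B'' ⟶ B'),
        Functor.IsLeftAdjoint t.toFunctor →
          Functor.IsLeftAdjoint (pullback.snd t (pullback.fst s u)).toFunctor) ∧
    (IsFibration u.toFunctor ↔
      ∀ φ : Cat.of (Fin 3) ⟶ B,
        Functor.IsLeftAdjoint (pullback.snd incl12 (pullback.fst φ u)).toFunctor) := by
  have had : IsFibration u.toFunctor → ∀ (B' B'' : Cat.{0,0}) (s : B' ⟶ B) (t : B'' ⟶ B'),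
      t.toFunctor.IsLeftAdjoint → (pullback.snd t (pullback.fst s u)).toFunctor.IsLeftAdjoint :=
    fun hF B' B'' s t ht => (bridge u s t).mpr (mainA u.toFunctor hF s.toFunctor t.toFunctor ht)
  have hda : (∀ φ : Cat.of (Fin 3) ⟶ B,
      (pullback.snd incl12 (pullback.fst φ u)).toFunctor.IsLeftAdjoint) → IsFibration u.toFunctor :=
    fun hφ => mainB u.toFunctor (fun φ => (bridge u φ.toCatHom incl12).mp (hφ φ.toCatHom))
  refine ⟨⟨?_, ?_⟩, ⟨?_, ?_⟩, ⟨?_, ?_⟩⟩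
  · intro hF B' B'' s t ht
    exact (asphericIff _).mpr (had hF B' B'' s t ((asphericIff t).mp ht))
  · intro hS
    apply hda
    intro φ
    exact (asphericIff _).mp
      (hS (Cat.of (Fin 3)) (Cat.of (Fin 2)) φ incl12
        ((asphericIff incl12).mpr incl12_isLeftAdjoint))
  · exact fun hF => had hF
  · intro hC
    exact hda (fun φ => hC _ _ φ incl12 incl12_isLeftAdjoint)
  · intro hF φ
    exact had hF _ _ φ incl12 incl12_isLeftAdjoint
  · exact hda


end Paper
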